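/- Let t ∉ spec(A), let P_L be the orthogonal projection onto L in the inner product q_t(u,v) = ⟨(A−t)u,(A−t)v⟩, and let φ be a unit vector in the span of eigenvectors φ_1,…,φ_j of |A−t| with eigenvalues 𝔡_1(t) ≤ … ≤ 𝔡_j(t). Then ‖φ − P_L φ‖² ≤ (1/𝔡_1(t)²) Σ_{k=1}^j |φ_k − P_L φ_k|_t², where |u|_t = ‖(A−t)u‖. -/

import Mathlib

open scoped InnerProductSpace

variable {H : Type*} [NormedAddCommGroup H] [InnerProductSpace ℂ H] [CompleteSpace H]

/-- `Fapp A L j t` : the `j`-th min-max value of `‖(A-t)u‖/‖u‖` over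
`j`-dimensional subspaces of `L`. -/
noncomputable def Fapp (A : H →L[ℂ] H) (L : Submodule ℂ H) (j : ℕ) (t : ℝ) : ℝ :=
  sInf {r : ℝ | 0 ≤ r ∧ ∃ V : Submodule ℂ H, V ≤ L ∧ Module.finrank ℂ V = j ∧
    ∀ u ∈ V, ‖A u - (t : ℂ) • u‖ ≤ r * ‖u‖}

/-- `dd A j t` : the `j`-th min-max value of `‖(A-t)u‖/‖u‖` over all
`j`-dimensional subspaces of the space. -/
noncomputable def dd (A : H →L[ℂ] H) (j : ℕ) (t : ℝ) : ℝ :=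
  sInf {r : ℝ | 0 ≤ r ∧ ∃ V : Submodule ℂ H, Module.finrank ℂ V = j ∧
    ∀ u ∈ V, ‖A u - (t : ℂ) • u‖ ≤ r * ‖u‖}

/-- `tr 1_{[a,b]}(A) ≥ j` : there is a `j`-dimensional subspace on which the
quadratic form of `(A-a)(A-b)` is non-positive. -/
def countGeIcc (A : H →L[ℂ] H) (a b : ℝ) (j : ℕ) : Prop :=
  ∃ V : Submodule ℂ H, Module.finrank ℂ V = j ∧
    ∀ u ∈ V, (inner ℂ (A u - (a : ℂ) • u) (A u - (b : ℂ) • u) : ℂ).re ≤ 0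

/-- `tr 1_{(a,b]}(A) ≥ j`. -/
def countGeIoc (A : H →L[ℂ] H) (a b : ℝ) (j : ℕ) : Prop :=
  ∃ V : Submodule ℂ H, Module.finrank ℂ V = j ∧
    (∀ u ∈ V, (inner ℂ (A u - (a : ℂ) • u) (A u - (b : ℂ) • u) : ℂ).re ≤ 0) ∧
    V ⊓ LinearMap.ker (((A - (a : ℂ) • (1 : H →L[ℂ] H) : H →L[ℂ] H) : H →ₗ[ℂ] H)) = ⊥

/-- `tr 1_{[a,b)}(A) ≥ j`. -/
def countGeIco (A : H →L[ℂ] H) (a b : ℝ) (j : ℕ) : Prop :=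
  ∃ V : Submodule ℂ H, Module.finrank ℂ V = j ∧
    (∀ u ∈ V, (inner ℂ (A u - (a : ℂ) • u) (A u - (b : ℂ) • u) : ℂ).re ≤ 0) ∧
    V ⊓ LinearMap.ker (((A - (b : ℂ) • (1 : H →L[ℂ] H) : H →L[ℂ] H) : H →ₗ[ℂ] H)) = ⊥

/-- `nminus A j t` : the `j`-th spectral point of `A` to the left of `t`,
counting multiplicities, i.e. `sup {s < t : tr 1_{(s,t]}(A) ≥ j}`. -/
noncomputable def nminus (A : H →L[ℂ] H) (j : ℕ) (t : ℝ) : ℝ :=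
  sSup {s : ℝ | s < t ∧ countGeIoc A s t j}

/-- `nplus A j t` : the `j`-th spectral point of `A` to the right of `t`. -/
noncomputable def nplus (A : H →L[ℂ] H) (j : ℕ) (t : ℝ) : ℝ :=
  sInf {s : ℝ | t < s ∧ countGeIco A t s j}

/-- The real spectrum of `A`. -/
def specRe (A : H →L[ℂ] H) : Set ℝ := {x : ℝ | (x : ℂ) ∈ spectrum ℂ A}

/-- if `t ∉ spec(A)`, `P` is the `q_t`-orthogonal projection
onto `L`, and `φ` is a unit vector in the span of orthonormal eigenvectors
`φ_1, …, φ_j` of `|A-t|` with eigenvalues `𝔡_1(t) ≤ … ≤ 𝔡_j(t)`, then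
`‖φ - Pφ‖² ≤ (1/𝔡_1(t)²) Σ_{k=1}^j |φ_k - Pφ_k|_t²`. -/
theorem stmt_16 (A : H →L[ℂ] H) (hA : IsSelfAdjoint A)
    (L : Submodule ℂ H) [FiniteDimensional ℂ L] (t : ℝ)
    (ht : (t : ℂ) ∉ spectrum ℂ A)
    (j : ℕ) (φv : Fin j → H) (hφon : Orthonormal ℂ φv)
    (hφeig : ∀ k : Fin j,
      A (A (φv k) - (t : ℂ) • φv k) - (t : ℂ) • (A (φv k) - (t : ℂ) • φv k) =
        (((dd A (k.1 + 1) t : ℝ) : ℂ) ^ 2) • φv k)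
    (P : H →ₗ[ℂ] H) (hPmem : ∀ u : H, P u ∈ L)
    (hPorth : ∀ u : H, ∀ v ∈ L,
      (inner ℂ (A (u - P u) - (t : ℂ) • (u - P u)) (A v - (t : ℂ) • v) : ℂ) = 0)
    (c : Fin j → ℂ) (φ : H) (hφ : φ = ∑ k, c k • φv k) (hφn : ‖φ‖ = 1) :
    ‖φ - P φ‖ ^ 2 ≤ (1 / dd A 1 t ^ 2) *
      ∑ k, ‖A (φv k - P (φv k)) - (t : ℂ) • (φv k - P (φv k))‖ ^ 2 := by
  classical
  set B : H →L[ℂ] H := A - (t : ℂ) • (1 : H →L[ℂ] H) with hBdef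
  have hBapp : ∀ u : H, A u - (t : ℂ) • u = B u := by
    intro u; simp [hBdef, ContinuousLinearMap.sub_apply, ContinuousLinearMap.smul_apply]
  -- inverse bound
  have hunit : IsUnit ((algebraMap ℂ (H →L[ℂ] H)) (t : ℂ) - A) := spectrum.notMem_iff.mp ht
  obtain ⟨U, hU⟩ := hunit
  set M := ‖(↑U⁻¹ : H →L[ℂ] H)‖ with hMdef
  have hMbound : ∀ x : H, ‖x‖ ≤ M * ‖B x‖ := by
    intro x
    have h1 : (↑U⁻¹ * ↑U : H →L[ℂ] H) = 1 := U.inv_mul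
    have h2 : (↑U⁻¹ : H →L[ℂ] H) ((↑U : H →L[ℂ] H) x) = x := by
      rw [← ContinuousLinearMap.mul_apply, h1, ContinuousLinearMap.one_apply]
    have h3 : (↑U : H →L[ℂ] H) x = -(B x) := by
      rw [hU]
      simp [hBdef, Algebra.algebraMap_eq_smul_one, ContinuousLinearMap.sub_apply,
        ContinuousLinearMap.smul_apply]
    calc ‖x‖ = ‖(↑U⁻¹ : H →L[ℂ] H) ((↑U : H →L[ℂ] H) x)‖ := by rw [h2]
      _ ≤ M * ‖(↑U : H →L[ℂ] H) x‖ := (↑U⁻¹ : H →L[ℂ] H).le_opNorm _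
      _ = M * ‖B x‖ := by rw [h3, norm_neg]
  have hφ0 : φ ≠ 0 := by
    intro h; rw [h, norm_zero] at hφn; norm_num at hφn
  have hM : 0 < M := by
    by_contra h
    push_neg at h
    have := hMbound φ
    have : ‖φ‖ ≤ 0 := this.trans (mul_nonpos_of_nonpos_of_nonneg h (norm_nonneg _))
    rw [hφn] at this; linarith
  -- the set defining dd A 1 t
  set S : Set ℝ := {r : ℝ | 0 ≤ r ∧ ∃ V : Submodule ℂ H, Module.finrank ℂ V = 1 ∧
    ∀ u ∈ V, ‖A u - (t : ℂ) • u‖ ≤ r * ‖u‖} with hSdef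
  have hdd : dd A 1 t = sInf S := rfl
  have hmemS : ∀ u : H, u ≠ 0 → (‖B u‖ / ‖u‖) ∈ S := by
    intro u hu
    have hun : (0:ℝ) < ‖u‖ := norm_pos_iff.mpr hu
    refine ⟨div_nonneg (norm_nonneg _) (norm_nonneg _), ℂ ∙ u, finrank_span_singleton hu, ?_⟩
    intro w hw
    obtain ⟨a, rfl⟩ := Submodule.mem_span_singleton.mp hw
    rw [hBapp, map_smul, norm_smul, norm_smul]
    have heq : ‖B u‖ / ‖u‖ * (‖a‖ * ‖u‖) = ‖a‖ * ‖B u‖ := by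
      field_simp
    rw [heq]
  have hSne : S.Nonempty := ⟨_, hmemS φ hφ0⟩
  have hSbdd : BddBelow S := ⟨0, fun r hr => hr.1⟩
  have hdlb : ∀ r ∈ S, 1 / M ≤ r := by
    rintro r ⟨hr0, V, hV1, hVr⟩
    have hVne : V ≠ ⊥ := by
      intro h; rw [h] at hV1; simp at hV1
    obtain ⟨v, hvV, hv0⟩ := Submodule.ne_bot_iff V |>.mp hVne
    have hvn : (0:ℝ) < ‖v‖ := norm_pos_iff.mpr hv0
    have h1 : ‖v‖ ≤ M * (r * ‖v‖) := (hMbound v).trans (by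
      have := hVr v hvV
      rw [hBapp] at this
      exact mul_le_mul_of_nonneg_left this hM.le)
    have h2 : 1 ≤ M * r := by nlinarith [h1, hvn]
    rw [div_le_iff₀ hM]
    linarith [h2]
  have hd_ge : 1 / M ≤ dd A 1 t := by
    rw [hdd]; exact le_csInf hSne hdlb
  have hd_pos : 0 < dd A 1 t := lt_of_lt_of_le (by positivity) hd_ge
  have hkey : ∀ u : H, dd A 1 t * ‖u‖ ≤ ‖B u‖ := by
    intro u
    rcases eq_or_ne u 0 with rfl | hu
    · simp
    · have hun : (0:ℝ) < ‖u‖ := norm_pos_iff.mpr hu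
      have : dd A 1 t ≤ ‖B u‖ / ‖u‖ := by
        rw [hdd]; exact csInf_le hSbdd (hmemS u hu)
      calc dd A 1 t * ‖u‖ ≤ (‖B u‖ / ‖u‖) * ‖u‖ := mul_le_mul_of_nonneg_right this hun.le
        _ = ‖B u‖ := div_mul_cancel₀ _ (ne_of_gt hun)
  -- sum of |c_k|^2 = 1
  have hc2 : ∑ k, ‖c k‖ ^ 2 = 1 := by
    have h1 : (inner ℂ φ φ : ℂ) = ∑ k, (starRingEnd ℂ) (c k) * c k := by
      rw [hφ]; exact hφon.inner_sum c c Finset.univ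
    have h2 : (inner ℂ φ φ : ℂ) = (1 : ℂ) := by
      rw [inner_self_eq_norm_sq_to_K, hφn]; norm_num
    have h3 : ∀ k : Fin j, (starRingEnd ℂ) (c k) * c k = ((‖c k‖ : ℂ)) ^ 2 := by
      intro k
      exact RCLike.conj_mul (c k)
    rw [h2] at h1
    have h4 : ((1:ℝ) : ℂ) = ((∑ k, ‖c k‖ ^ 2 : ℝ) : ℂ) := by
      push_cast
      rw [h1]
      exact Finset.sum_congr rfl fun k _ => h3 k
    exact_mod_cast h4.symm
  -- decomposition
  have hdecomp : φ - P φ = ∑ k, c k • (φv k - P (φv k)) := by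
    rw [hφ, map_sum]
    rw [← Finset.sum_sub_distrib]
    refine Finset.sum_congr rfl fun k _ => ?_
    rw [map_smul, smul_sub]
  have htri : ‖B (φ - P φ)‖ ≤ ∑ k, ‖c k‖ * ‖B (φv k - P (φv k))‖ := by
    rw [hdecomp, map_sum]
    refine (norm_sum_le _ _).trans (le_of_eq ?_)
    refine Finset.sum_congr rfl fun k _ => ?_
    rw [map_smul, norm_smul]
  have hCS : (∑ k, ‖c k‖ * ‖B (φv k - P (φv k))‖) ^ 2 ≤
      (∑ k, ‖c k‖ ^ 2) * ∑ k, ‖B (φv k - P (φv k))‖ ^ 2 :=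
    Finset.sum_mul_sq_le_sq_mul_sq _ _ _
  rw [hc2, one_mul] at hCS
  -- combine
  simp only [hBapp]
  set e := φ - P φ with hedef
  set S2 := ∑ k, ‖B (φv k - P (φv k))‖ ^ 2 with hS2def
  have hS2nn : 0 ≤ S2 := Finset.sum_nonneg fun k _ => sq_nonneg _
  have h1 : dd A 1 t * ‖e‖ ≤ ‖B e‖ := hkey e
  have hTnn : 0 ≤ ∑ k, ‖c k‖ * ‖B (φv k - P (φv k))‖ :=
    Finset.sum_nonneg fun k _ => mul_nonneg (norm_nonneg _) (norm_nonneg _)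
  have h2 : (dd A 1 t * ‖e‖) ^ 2 ≤ S2 := by
    have := pow_le_pow_left₀ (mul_nonneg hd_pos.le (norm_nonneg _)) (h1.trans htri) 2
    exact this.trans hCS
  rw [one_div, ← div_eq_inv_mul, le_div_iff₀ (by positivity : (0:ℝ) < dd A 1 t ^ 2)]
  nlinarith [h2]
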